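/- Let S_t : T² → T² denote the translation S_t(x, y) = (x + t, y). Let (h_n)_{n ≥ 1} be μ-preserving homeomorphisms of T², set H_n = h_1 ∘ ⋯ ∘ h_n, let (q_n)_{n ≥ 1} be a strictly increasing sequence of positive integers and α_n = p_n/q_n rationals such that h_{n+1} ∘ S_{α_{n+1}} = S_{α_{n+1}} ∘ h_{n+1} for every n, and let L_n ≥ 1 be a Lipschitz constant for H_n with respect to the quotient metric on T². Assume that for every n ≥ 1, L_n · q_n · |α_{n+1} − α_n| ≤ 2^{−(n+1)}. Then the sequence T_n := H_n ∘ S_{α_{n+1}} ∘ H_n⁻¹ converges uniformly to a μ-preserving homeomorphism T of T² (and T_n⁻¹ converges uniformly to T⁻¹), and moreover for every n ≥ 1 and every natural number m ≤ q_{n+1}, sup_{z ∈ T²} d(T^m z, T_n^m z) ≤ 2^{−(n+1)}. -/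

import Mathlib

open MeasureTheory Filter Topology
noncomputable section

abbrev Torus2 := UnitAddCircle × UnitAddCircle

/-- The translation `S_t : 𝕋² → 𝕋²`, `S_t(x, y) = (x + t, y)`. -/
def Storus (t : ℝ) : Torus2 → Torus2 := fun z => (z.1 + (t : UnitAddCircle), z.2)

lemma storus_add (s t : ℝ) (z : Torus2) : Storus s (Storus t z) = Storus (s + t) z := by
  simp only [Storus]
  refine Prod.ext ?_ rfl
  show z.1 + (t : UnitAddCircle) + (s : UnitAddCircle) = z.1 + ((s + t : ℝ) : UnitAddCircle)
  have : ((s + t : ℝ) : UnitAddCircle) = (s : UnitAddCircle) + (t : UnitAddCircle) := rfl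
  rw [this]; abel

lemma storus_zero (z : Torus2) : Storus 0 z = z := by
  simp only [Storus]
  refine Prod.ext ?_ rfl
  show z.1 + ((0 : ℝ) : UnitAddCircle) = z.1
  have : ((0 : ℝ) : UnitAddCircle) = 0 := rfl
  rw [this, add_zero]

lemma unit_coe_dist (s t : ℝ) : dist (s : UnitAddCircle) (t : UnitAddCircle) ≤ |s - t| := by
  rw [dist_eq_norm]
  have h1 : (s : UnitAddCircle) - (t : UnitAddCircle) = ((s - t : ℝ) : UnitAddCircle) := rfl
  rw [h1, ← Real.norm_eq_abs]
  exact QuotientAddGroup.norm_mk_le_norm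

lemma storus_dist (s t : ℝ) (z : Torus2) : dist (Storus s z) (Storus t z) ≤ |s - t| := by
  rw [Prod.dist_eq]
  simp only [Storus, dist_self]
  rw [max_le_iff]
  constructor
  · rw [dist_add_left]
    exact unit_coe_dist s t
  · positivity

lemma storus_cont (t : ℝ) : Continuous (Storus t) := by
  have hc : Continuous fun z : Torus2 => (z.1 + (t : UnitAddCircle), z.2) :=
    (continuous_fst.add continuous_const).prodMk continuous_snd
  exact hc

lemma storus_mp (t : ℝ) : MeasurePreserving (Storus t) (volume : Measure Torus2) volume := by
  rw [Measure.volume_eq_prod]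
  exact (measurePreserving_add_right volume (t : UnitAddCircle)).prod (MeasurePreserving.id volume)

lemma conj_iter (E : Torus2 ≃ₜ Torus2) (t : ℝ) (m : ℕ) (z : Torus2) :
    (fun w => E (Storus t (E.symm w)))^[m] z = E (Storus ((m : ℝ) * t) (E.symm z)) := by
  induction m generalizing z with
  | zero => simp [storus_zero]
  | succ m ih =>
    rw [Function.iterate_succ_apply', ih]
    show E (Storus t (E.symm (E (Storus ((m : ℝ) * t) (E.symm z))))) = _
    rw [E.symm_apply_apply, storus_add]
    have : t + (m : ℝ) * t = ((m + 1 : ℕ) : ℝ) * t := by push_cast; ring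
    rw [this]

lemma comm_iter (e : Torus2 → Torus2) (t : ℝ)
    (hc : ∀ z, e (Storus t z) = Storus t (e z)) (m : ℕ) (z : Torus2) :
    e (Storus ((m : ℝ) * t) z) = Storus ((m : ℝ) * t) (e z) := by
  induction m generalizing z with
  | zero => simp [storus_zero]
  | succ m ih =>
    have h1 : ((m + 1 : ℕ) : ℝ) * t = (m : ℝ) * t + t := by push_cast; ring
    rw [h1, ← storus_add, ih, hc, storus_add]

lemma conj_rewrite (Hn Hn1 h1 : Torus2 ≃ₜ Torus2) (hH : ∀ x, Hn1 x = Hn (h1 x)) (t : ℝ)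
    (hc : ∀ z, h1 (Storus t z) = Storus t (h1 z)) (z : Torus2) :
    Hn (Storus t (Hn.symm z)) = Hn1 (Storus t (Hn1.symm z)) := by
  have hsymm : Hn1.symm z = h1.symm (Hn.symm z) := by
    apply Hn1.injective
    rw [Hn1.apply_symm_apply, hH, h1.apply_symm_apply, Hn.apply_symm_apply]
  rw [hsymm, hH, hc, h1.apply_symm_apply]

lemma key_est (Hn Hn1 h1 : Torus2 ≃ₜ Torus2) (hH : ∀ x, Hn1 x = Hn (h1 x)) (β γ : ℝ)
    (hc : ∀ z, h1 (Storus β z) = Storus β (h1 z))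
    (Ln1 : ℝ) (hLn1 : 0 ≤ Ln1)
    (hLip : ∀ u v : Torus2, dist (Hn1 u) (Hn1 v) ≤ Ln1 * dist u v)
    (m : ℕ) (z : Torus2) :
    dist ((fun w => Hn1 (Storus γ (Hn1.symm w)))^[m] z)
      ((fun w => Hn (Storus β (Hn.symm w)))^[m] z) ≤ Ln1 * ((m : ℝ) * |γ - β|) := by
  rw [conj_iter, conj_iter,
    conj_rewrite Hn Hn1 h1 hH ((m : ℝ) * β) (comm_iter _ _ hc m) z]
  have habs : |(m : ℝ) * γ - (m : ℝ) * β| = (m : ℝ) * |γ - β| := by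
    rw [← mul_sub, abs_mul, Nat.abs_cast]
  calc dist (Hn1 (Storus ((m : ℝ) * γ) (Hn1.symm z))) (Hn1 (Storus ((m : ℝ) * β) (Hn1.symm z)))
      ≤ Ln1 * dist (Storus ((m : ℝ) * γ) (Hn1.symm z)) (Storus ((m : ℝ) * β) (Hn1.symm z)) :=
        hLip _ _
    _ ≤ Ln1 * |(m : ℝ) * γ - (m : ℝ) * β| :=
        mul_le_mul_of_nonneg_left (storus_dist _ _ _) hLn1
    _ = Ln1 * ((m : ℝ) * |γ - β|) := by rw [habs]

set_option maxHeartbeats 1600000 in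
/-- Convergence criterion for the approximation-by-conjugation scheme on `𝕋²` (in the
uniform topology). -/
theorem abc_uniform_convergence
    (h H : ℕ → (Torus2 ≃ₜ Torus2))
    (hmp : ∀ n, 1 ≤ n → MeasurePreserving (h n) volume volume)
    (hH1 : H 1 = h 1)
    (hHsucc : ∀ n, 1 ≤ n → H (n + 1) = (h (n + 1)).trans (H n))
    (q : ℕ → ℕ) (hqpos : ∀ n, 1 ≤ n → 0 < q n)
    (hqmono : StrictMonoOn q (Set.Ici 1))
    (p : ℕ → ℤ) (α : ℕ → ℝ) (hα : ∀ n, 1 ≤ n → α n = (p n : ℝ) / (q n : ℝ))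
    (hcomm : ∀ n, 1 ≤ n → ∀ z : Torus2,
      h (n + 1) (Storus (α (n + 1)) z) = Storus (α (n + 1)) (h (n + 1) z))
    (L : ℕ → ℝ) (hL1 : ∀ n, 1 ≤ n → 1 ≤ L n)
    (hLip : ∀ n, 1 ≤ n → ∀ u v : Torus2, dist (H n u) (H n v) ≤ L n * dist u v)
    (hclose : ∀ n, 1 ≤ n → L n * q n * |α (n + 1) - α n| ≤ ((2 : ℝ) ^ (n + 1))⁻¹) :
    ∃ T : Torus2 ≃ₜ Torus2,
      MeasurePreserving T volume volume ∧
      TendstoUniformly (fun n (z : Torus2) => H n (Storus (α (n + 1)) ((H n).symm z)))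
        T atTop ∧
      TendstoUniformly (fun n (z : Torus2) => H n (Storus (-(α (n + 1))) ((H n).symm z)))
        T.symm atTop ∧
      ∀ n, 1 ≤ n → ∀ m : ℕ, m ≤ q (n + 1) → ∀ z : Torus2,
        dist (T^[m] z)
          ((fun w : Torus2 => H n (Storus (α (n + 1)) ((H n).symm w)))^[m] z)
          ≤ ((2 : ℝ) ^ (n + 1))⁻¹ := by
  classical
  set f : ℕ → Torus2 → Torus2 :=
    fun n z => H n (Storus (α (n + 1)) ((H n).symm z)) with hfdef
  set g : ℕ → Torus2 → Torus2 :=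
    fun n z => H n (Storus (-(α (n + 1))) ((H n).symm z)) with hgdef
  -- measure preservation of the building blocks
  have mpH : ∀ n, 1 ≤ n → MeasurePreserving (H n) volume volume := by
    intro n hn
    induction n, hn using Nat.le_induction with
    | base => rw [hH1]; exact hmp 1 le_rfl
    | succ n hn ih =>
      rw [hHsucc n hn]
      exact ih.comp (hmp (n + 1) (by omega))
  have mpHsymm : ∀ n, 1 ≤ n → MeasurePreserving ((H n).symm) volume volume := by
    intro n hn
    have h1 : MeasurePreserving ((H n).toMeasurableEquiv) volume volume := by
      rw [Homeomorph.toMeasurableEquiv_coe]; exact mpH n hn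
    have h2 := h1.symm
    rwa [Homeomorph.toMeasurableEquiv_symm_coe] at h2
  have mpf : ∀ n, 1 ≤ n → MeasurePreserving (f n) volume volume := fun n hn =>
    (mpH n hn).comp ((storus_mp _).comp (mpHsymm n hn))
  have mpg : ∀ n, 1 ≤ n → MeasurePreserving (g n) volume volume := fun n hn =>
    (mpH n hn).comp ((storus_mp _).comp (mpHsymm n hn))
  -- negative commutation
  have hcommn : ∀ n, 1 ≤ n → ∀ z : Torus2,
      h (n + 1) (Storus (-(α (n + 1))) z) = Storus (-(α (n + 1))) (h (n + 1) z) := by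
    intro n hn z
    have h1 := hcomm n hn (Storus (-(α (n + 1))) z)
    rw [storus_add, add_neg_cancel, storus_zero] at h1
    rw [h1, storus_add, neg_add_cancel, storus_zero]
  have hHstep : ∀ n, 1 ≤ n → ∀ x, H (n + 1) x = H n (h (n + 1) x) := by
    intro n hn x; rw [hHsucc n hn]; rfl
  -- the main one-step estimate, for `f`
  have E1f : ∀ n, 1 ≤ n → ∀ m : ℕ, m ≤ q (n + 1) → ∀ z : Torus2,
      dist ((f (n + 1))^[m] z) ((f n)^[m] z) ≤ ((2 : ℝ) ^ (n + 1 + 1))⁻¹ := by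
    intro n hn m hm z
    have hL0 : (0 : ℝ) ≤ L (n + 1) := le_trans zero_le_one (hL1 (n + 1) (by omega))
    have key := key_est (H n) (H (n + 1)) (h (n + 1)) (hHstep n hn)
      (α (n + 1)) (α (n + 1 + 1)) (hcomm n hn) (L (n + 1)) hL0
      (hLip (n + 1) (by omega)) m z
    refine key.trans ?_
    have hcl := hclose (n + 1) (by omega)
    have hD : (0 : ℝ) ≤ |α (n + 1 + 1) - α (n + 1)| := abs_nonneg _
    have hmq : (m : ℝ) ≤ (q (n + 1) : ℝ) := by exact_mod_cast hm
    nlinarith [mul_le_mul_of_nonneg_left (mul_le_mul_of_nonneg_right hmq hD) hL0]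
  -- the main one-step estimate, for `g`
  have E1g : ∀ n, 1 ≤ n → ∀ m : ℕ, m ≤ q (n + 1) → ∀ z : Torus2,
      dist ((g (n + 1))^[m] z) ((g n)^[m] z) ≤ ((2 : ℝ) ^ (n + 1 + 1))⁻¹ := by
    intro n hn m hm z
    have hL0 : (0 : ℝ) ≤ L (n + 1) := le_trans zero_le_one (hL1 (n + 1) (by omega))
    have key := key_est (H n) (H (n + 1)) (h (n + 1)) (hHstep n hn)
      (-(α (n + 1))) (-(α (n + 1 + 1))) (hcommn n hn) (L (n + 1)) hL0
      (hLip (n + 1) (by omega)) m z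
    refine key.trans ?_
    have hcl := hclose (n + 1) (by omega)
    have habs : |-(α (n + 1 + 1)) - -(α (n + 1))| = |α (n + 1 + 1) - α (n + 1)| := by
      rw [← abs_neg]; ring_nf
    rw [habs]
    have hD : (0 : ℝ) ≤ |α (n + 1 + 1) - α (n + 1)| := abs_nonneg _
    have hmq : (m : ℝ) ≤ (q (n + 1) : ℝ) := by exact_mod_cast hm
    nlinarith [mul_le_mul_of_nonneg_left (mul_le_mul_of_nonneg_right hmq hD) hL0]
  -- continuity
  have contf : ∀ n, Continuous (f n) := fun n =>
    (H n).continuous.comp ((storus_cont _).comp (H n).symm.continuous)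
  have contg : ∀ n, Continuous (g n) := fun n =>
    (H n).continuous.comp ((storus_cont _).comp (H n).symm.continuous)
  set F : ℕ → C(Torus2, Torus2) := fun n => ⟨f n, contf n⟩ with hFdef
  set G : ℕ → C(Torus2, Torus2) := fun n => ⟨g n, contg n⟩ with hGdef
  have hq1 : ∀ n, 1 ≤ n → 1 ≤ q (n + 1) := fun n hn => hqpos (n + 1) (by omega)
  have hFd : ∀ n, 1 ≤ n → dist (F n) (F (n + 1)) ≤ ((2 : ℝ) ^ (n + 1 + 1))⁻¹ := by
    intro n hn
    refine (ContinuousMap.dist_le (by positivity)).mpr fun z => ?_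
    have h1 := E1f n hn 1 (hq1 n hn) z
    simp only [Function.iterate_one] at h1
    rw [show dist (F n z) (F (n + 1) z) = dist (f (n + 1) z) (f n z) from dist_comm _ _]
    exact h1
  have hGd : ∀ n, 1 ≤ n → dist (G n) (G (n + 1)) ≤ ((2 : ℝ) ^ (n + 1 + 1))⁻¹ := by
    intro n hn
    refine (ContinuousMap.dist_le (by positivity)).mpr fun z => ?_
    have h1 := E1g n hn 1 (hq1 n hn) z
    simp only [Function.iterate_one] at h1
    rw [show dist (G n z) (G (n + 1) z) = dist (g (n + 1) z) (g n z) from dist_comm _ _]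
    exact h1
  -- Cauchy sequences
  have hsum3 : Summable (fun n : ℕ => ((2 : ℝ) ^ (n + 1 + 1 + 1))⁻¹) := by
    have hgeo : Summable (fun n : ℕ => ((2 : ℝ)⁻¹) ^ n) :=
      summable_geometric_of_lt_one (by norm_num) (by norm_num)
    have := hgeo.mul_left (((2 : ℝ)⁻¹) ^ 3)
    refine this.congr fun n => ?_
    rw [← pow_add]
    rw [← inv_pow]
    congr 1
    omega
  have cauchy_of_d : ∀ (P : ℕ → C(Torus2, Torus2)),
      (∀ n, 1 ≤ n → dist (P n) (P (n + 1)) ≤ ((2 : ℝ) ^ (n + 1 + 1))⁻¹) →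
      CauchySeq P := by
    intro P hP
    refine cauchySeq_of_dist_le_of_summable (fun n => dist (P n) (P (n + 1)))
      (fun n => le_rfl) ?_
    rw [← summable_nat_add_iff 1]
    refine Summable.of_nonneg_of_le (fun n => dist_nonneg) (fun n => hP (n + 1) (by omega))
      ?_
    exact hsum3
  obtain ⟨Fc, hFc⟩ := cauchySeq_tendsto_of_complete (cauchy_of_d F hFd)
  obtain ⟨Gc, hGc⟩ := cauchySeq_tendsto_of_complete (cauchy_of_d G hGd)
  have hFu : TendstoUniformly f Fc atTop := by
    have := ContinuousMap.tendsto_iff_tendstoUniformly.mp hFc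
    exact this
  have hGu : TendstoUniformly g Gc atTop := by
    have := ContinuousMap.tendsto_iff_tendstoUniformly.mp hGc
    exact this
  -- inverse identities
  have hgf : ∀ n z, g n (f n z) = z := by
    intro n z
    show H n (Storus (-(α (n + 1))) ((H n).symm (H n (Storus (α (n + 1)) ((H n).symm z))))) = z
    rw [(H n).symm_apply_apply, storus_add, neg_add_cancel, storus_zero,
      (H n).apply_symm_apply]
  have hfg : ∀ n z, f n (g n z) = z := by
    intro n z
    show H n (Storus (α (n + 1)) ((H n).symm (H n (Storus (-(α (n + 1))) ((H n).symm z))))) = z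
    rw [(H n).symm_apply_apply, storus_add, add_neg_cancel, storus_zero,
      (H n).apply_symm_apply]
  have hGF : Function.LeftInverse Gc Fc := by
    intro z
    have h1 : Tendsto (fun n => g n (f n z)) atTop (𝓝 (Gc (Fc z))) :=
      hGu.tendsto_comp Gc.continuous.continuousAt (hFu.tendsto_at z)
    have h2 : Tendsto (fun n => g n (f n z)) atTop (𝓝 z) := by
      simp only [hgf]; exact tendsto_const_nhds
    exact tendsto_nhds_unique h1 h2
  have hFG : Function.RightInverse Gc Fc := by
    intro z
    have h1 : Tendsto (fun n => f n (g n z)) atTop (𝓝 (Fc (Gc z))) :=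
      hFu.tendsto_comp Fc.continuous.continuousAt (hGu.tendsto_at z)
    have h2 : Tendsto (fun n => f n (g n z)) atTop (𝓝 z) := by
      simp only [hfg]; exact tendsto_const_nhds
    exact tendsto_nhds_unique h1 h2
  set T : Torus2 ≃ₜ Torus2 :=
    { toFun := Fc
      invFun := Gc
      left_inv := hGF
      right_inv := hFG
      continuous_toFun := Fc.continuous
      continuous_invFun := Gc.continuous } with hTdef
  have hTcoe : ⇑T = ⇑Fc := rfl
  have hTsymmcoe : ⇑T.symm = ⇑Gc := rfl
  have hFuT : TendstoUniformly f (⇑T) atTop := hFu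
  have hGuT : TendstoUniformly g (⇑T.symm) atTop := hGu
  -- measure preservation of the limit
  have main_le : ∀ (Tc : Torus2 ≃ₜ Torus2) (u : ℕ → Torus2 → Torus2),
      (∀ n, 1 ≤ n → MeasurePreserving (u n) volume volume) →
      TendstoUniformly u (⇑Tc) atTop →
      ∀ U : Set Torus2, IsOpen U → volume (⇑Tc ⁻¹' U) ≤ volume U := by
    intro Tc u hu hconv U hU
    set V : ℕ → Set Torus2 := fun k => (Metric.thickening ((k : ℝ) + 1)⁻¹ Uᶜ)ᶜ with hVdef
    have hVmono : Monotone V := by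
      intro k k' hk
      have : Metric.thickening ((k' : ℝ) + 1)⁻¹ Uᶜ ⊆ Metric.thickening ((k : ℝ) + 1)⁻¹ Uᶜ :=
        Metric.thickening_mono (by
          apply inv_anti₀
          · positivity
          · exact_mod_cast Nat.add_le_add_right hk 1) _
      exact Set.compl_subset_compl.mpr this
    have hUV : U = ⋃ k, V k := by
      apply Set.Subset.antisymm
      · intro x hx
        obtain ⟨ε, hε, hball⟩ := Metric.isOpen_iff.mp hU x hx
        obtain ⟨k, hk⟩ := exists_nat_gt ε⁻¹
        refine Set.mem_iUnion.mpr ⟨k, ?_⟩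
        intro hmem
        rw [Metric.mem_thickening_iff] at hmem
        obtain ⟨y, hy, hdy⟩ := hmem
        have hlt : ((k : ℝ) + 1)⁻¹ < ε := by
          rw [inv_lt_comm₀ (by positivity) hε]
          exact hk.trans (lt_add_one _)
        exact hy (hball (Metric.mem_ball'.mpr (hdy.trans hlt)))
      · refine Set.iUnion_subset fun k x hx => ?_
        by_contra hc
        exact hx (Metric.self_subset_thickening (show (0:ℝ) < ((k : ℝ) + 1)⁻¹ by positivity) Uᶜ hc)
    have hmeas : volume (⇑Tc ⁻¹' U) = ⨆ k, volume (⇑Tc ⁻¹' V k) := by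
      rw [hUV, Set.preimage_iUnion]
      exact Monotone.measure_iUnion fun k k' hk =>
        Set.preimage_mono (hVmono hk)
    rw [hmeas]
    refine iSup_le fun k => ?_
    have hev : ∀ᶠ n in atTop, (∀ x, dist (⇑Tc x) (u n x) < ((k : ℝ) + 1)⁻¹) ∧ 1 ≤ n := by
      refine Filter.Eventually.and ?_ (eventually_ge_atTop 1)
      exact (Metric.tendstoUniformly_iff.mp hconv) _ (by positivity)
    obtain ⟨n, hn1, hn2⟩ := hev.exists
    have hsub : ⇑Tc ⁻¹' V k ⊆ u n ⁻¹' U := by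
      intro x hx
      by_contra hc
      exact hx (Metric.mem_thickening_iff.mpr ⟨u n x, hc, hn1 x⟩)
    calc volume (⇑Tc ⁻¹' V k) ≤ volume (u n ⁻¹' U) := measure_mono hsub
      _ = volume U := (hu n hn2).measure_preimage hU.measurableSet.nullMeasurableSet
  have heq : ∀ U : Set Torus2, IsOpen U → volume (⇑T ⁻¹' U) = volume U := by
    intro U hU
    refine le_antisymm (main_le T f mpf hFuT U hU) ?_
    have h2 := main_le T.symm g mpg hGuT (⇑T ⁻¹' U) (hU.preimage T.continuous)
    have hset : (⇑T.symm) ⁻¹' ((⇑T) ⁻¹' U) = U := by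
      ext x
      simp [Set.mem_preimage]
    rwa [hset] at h2
  have hmapT : Measure.map (⇑T) volume = volume := by
    haveI : IsFiniteMeasure (Measure.map (⇑T) (volume : Measure Torus2)) := by
      constructor
      rw [Measure.map_apply T.continuous.measurable MeasurableSet.univ]
      exact measure_lt_top _ _
    refine ext_of_generate_finite {s : Set Torus2 | IsOpen s} ?_ isPiSystem_isOpen ?_ ?_
    · exact BorelSpace.measurable_eq
    · intro s hs
      have hs' : IsOpen s := hs
      rw [Measure.map_apply T.continuous.measurable hs'.measurableSet]
      exact heq s hs'
    · rw [Measure.map_apply T.continuous.measurable MeasurableSet.univ]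
      exact heq Set.univ isOpen_univ
  have hmpT : MeasurePreserving (⇑T) volume volume := ⟨T.continuous.measurable, hmapT⟩
  -- iterate estimates
  have hqm : ∀ n k, 1 ≤ n → n ≤ k → q (n + 1) ≤ q (k + 1) := by
    intro n k hn hk
    exact hqmono.monotoneOn (Set.mem_Ici.mpr (by omega)) (Set.mem_Ici.mpr (by omega))
      (by omega)
  have E2 : ∀ n, 1 ≤ n → ∀ m : ℕ, m ≤ q (n + 1) → ∀ k, n ≤ k → ∀ z : Torus2,
      dist ((f k)^[m] z) ((f n)^[m] z) ≤ ((2 : ℝ) ^ (n + 1))⁻¹ - ((2 : ℝ) ^ (k + 1))⁻¹ := by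
    intro n hn m hm k hk
    induction k, hk using Nat.le_induction with
    | base => intro z; rw [dist_self, sub_self]
    | succ k hk ih =>
      intro z
      have hmk : m ≤ q (k + 1) := hm.trans (hqm n k hn hk)
      have hkey := E1f k (by omega) m hmk z
      have hpow : (2 : ℝ) ^ (k + 1 + 1) = 2 * 2 ^ (k + 1) := by ring
      have hpos : (0 : ℝ) < 2 ^ (k + 1) := by positivity
      calc dist ((f (k + 1))^[m] z) ((f n)^[m] z)
          ≤ dist ((f (k + 1))^[m] z) ((f k)^[m] z) + dist ((f k)^[m] z) ((f n)^[m] z) :=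
            dist_triangle _ _ _
        _ ≤ ((2 : ℝ) ^ (k + 1 + 1))⁻¹ + (((2 : ℝ) ^ (n + 1))⁻¹ - ((2 : ℝ) ^ (k + 1))⁻¹) :=
            add_le_add hkey (ih z)
        _ ≤ ((2 : ℝ) ^ (n + 1))⁻¹ - ((2 : ℝ) ^ (k + 1 + 1))⁻¹ := by
            rw [hpow]
            rw [mul_inv]
            have h2 : (0:ℝ) < (2 ^ (k+1))⁻¹ := by positivity
            nlinarith
  have hiterconv : ∀ (m : ℕ) (z : Torus2),
      Tendsto (fun k => (f k)^[m] z) atTop (𝓝 ((⇑T)^[m] z)) := by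
    intro m
    induction m with
    | zero => intro z; simp only [Function.iterate_zero_apply]; exact tendsto_const_nhds
    | succ m ih =>
      intro z
      simp only [Function.iterate_succ_apply']
      exact hFuT.tendsto_comp T.continuous.continuousAt (ih z)
  refine ⟨T, hmpT, hFuT, hGuT, ?_⟩
  intro n hn m hm z
  have hT : Tendsto (fun k => dist ((f k)^[m] z) ((f n)^[m] z)) atTop
      (𝓝 (dist ((⇑T)^[m] z) ((f n)^[m] z))) :=
    (hiterconv m z).dist tendsto_const_nhds
  refine le_of_tendsto hT ?_
  filter_upwards [eventually_ge_atTop n] with k hk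
  have h1 := E2 n hn m hm k hk z
  have h2 : (0 : ℝ) ≤ ((2 : ℝ) ^ (k + 1))⁻¹ := by positivity
  linarith
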